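/- Let N ≥ 1 and let X : ℝᴺ → ℝᴺ be a continuously differentiable vector field with X(z₀) = 0 and DX(z₀) = 0 at some point z₀. Then for every T > 0 there exists an open neighborhood U of z₀ with the following property: there is no non-constant continuously differentiable curve γ : ℝ → ℝᴺ satisfying γ′(s) = X(γ(s)) for all s, γ(ℝ) ⊆ U, and γ(s + T′) = γ(s) for all s for some period T′ with 0 < T′ ≤ T. -/

import Mathlib

set_option maxHeartbeats 1000000


/-- If `X` is a `C¹` vector field on `ℝᴺ` with `X(z₀) = 0` and
`DX(z₀) = 0`, then for every `T > 0` there is an open neighborhood `U` of `z₀`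
containing no non-constant periodic orbit of `X` of period `T′` with `0 < T′ ≤ T`. -/
theorem stmt_4 (N : ℕ) (hN : 1 ≤ N)
    (X : EuclideanSpace ℝ (Fin N) → EuclideanSpace ℝ (Fin N))
    (hX : ContDiff ℝ 1 X)
    (z₀ : EuclideanSpace ℝ (Fin N)) (hz₀ : X z₀ = 0)
    (hDX : fderiv ℝ X z₀ = 0) :
    ∀ T : ℝ, 0 < T →
      ∃ U : Set (EuclideanSpace ℝ (Fin N)), IsOpen U ∧ z₀ ∈ U ∧
        ¬ ∃ γ : ℝ → EuclideanSpace ℝ (Fin N),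
            ContDiff ℝ 1 γ ∧
            (∀ s : ℝ, deriv γ s = X (γ s)) ∧
            Set.range γ ⊆ U ∧
            (∃ s₁ s₂ : ℝ, γ s₁ ≠ γ s₂) ∧
            (∃ T' : ℝ, 0 < T' ∧ T' ≤ T ∧ ∀ s : ℝ, γ (s + T') = γ s) := by
  intro T hT
  set ε : ℝ := 1 / (4 * T) with hεdef
  have hε : 0 < ε := by positivity
  -- find a ball where the derivative is small
  have hcont : Continuous fun y => ‖fderiv ℝ X y‖ :=
    (hX.continuous_fderiv one_ne_zero).norm
  have hVopen : IsOpen {y | ‖fderiv ℝ X y‖ < ε} :=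
    isOpen_lt hcont continuous_const
  have hz₀V : z₀ ∈ {y | ‖fderiv ℝ X y‖ < ε} := by
    simp only [Set.mem_setOf_eq, hDX, norm_zero]; exact hε
  obtain ⟨r, hr, hballV⟩ := Metric.isOpen_iff.1 hVopen z₀ hz₀V
  have hball : ∀ y ∈ Metric.ball z₀ r, ‖fderiv ℝ X y‖ ≤ ε :=
    fun y hy => (hballV hy).le
  refine ⟨Metric.ball z₀ r, Metric.isOpen_ball, Metric.mem_ball_self hr, ?_⟩
  rintro ⟨γ, hγ, hode, hrange, ⟨s₁, s₂, hne⟩, T', hT'pos, hT'le, hper⟩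
  have hT'ne : T' ≠ 0 := ne_of_gt hT'pos
  have hperiodic : Function.Periodic γ T' := hper
  have hXdiff : Differentiable ℝ X := hX.differentiable one_ne_zero
  have hmem : ∀ s : ℝ, γ s ∈ Metric.ball z₀ r := fun s => hrange ⟨s, rfl⟩
  -- Lipschitz bound on the ball
  have hlip : ∀ u v : ℝ, ‖X (γ u) - X (γ v)‖ ≤ ε * ‖γ u - γ v‖ := by
    intro u v
    exact (convex_ball z₀ r).norm_image_sub_le_of_norm_fderiv_le
      (fun x _ => hXdiff x) hball (hmem v) (hmem u)
  -- fundamental theorem of calculus facts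
  have hderiv : ∀ u : ℝ, HasDerivAt γ (X (γ u)) u := by
    intro u
    have := ((hγ.differentiable one_ne_zero) u).hasDerivAt
    rwa [hode u] at this
  have hXγcont : Continuous fun u => X (γ u) :=
    hX.continuous.comp hγ.continuous
  have hint : ∀ a b : ℝ, IntervalIntegrable (fun u => X (γ u))
      MeasureTheory.volume a b := fun a b => hXγcont.intervalIntegrable a b
  have hFTC : ∀ a b : ℝ, ∫ u in a..b, X (γ u) = γ b - γ a := fun a b =>
    intervalIntegral.integral_eq_sub_of_hasDerivAt (fun u _ => hderiv u) (hint a b)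
  have hzero : (∫ u in (0:ℝ)..T', X (γ u)) = 0 := by
    rw [hFTC]
    have : γ T' = γ 0 := by simpa using hper 0
    rw [this, sub_self]
  -- diameter of the orbit is attained
  have hK : IsCompact ((Set.Icc (0:ℝ) T') ×ˢ (Set.Icc (0:ℝ) T')) :=
    isCompact_Icc.prod isCompact_Icc
  have hKne : ((Set.Icc (0:ℝ) T') ×ˢ (Set.Icc (0:ℝ) T')).Nonempty :=
    ⟨(0, 0), by constructor <;> exact Set.mem_Icc.2 ⟨le_rfl, hT'pos.le⟩⟩
  have hfcont : Continuous fun p : ℝ × ℝ => ‖γ p.1 - γ p.2‖ :=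
    ((hγ.continuous.comp continuous_fst).sub (hγ.continuous.comp continuous_snd)).norm
  obtain ⟨p, hpK, hpmax⟩ := hK.exists_isMaxOn hKne hfcont.continuousOn
  rw [isMaxOn_iff] at hpmax
  set D : ℝ := ‖γ p.1 - γ p.2‖ with hDdef
  -- reduction modulo the period
  have hred : ∀ u : ℝ, ∃ v ∈ Set.Icc (0:ℝ) T', γ v = γ u := by
    intro u
    refine ⟨u - ⌊u / T'⌋ * T', ?_, hperiodic.sub_int_mul_eq _⟩
    have heq : u - (⌊u / T'⌋ : ℝ) * T' = Int.fract (u / T') * T' := by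
      rw [Int.fract, sub_mul, div_mul_cancel₀ _ hT'ne]
    rw [heq]
    constructor
    · exact mul_nonneg (Int.fract_nonneg _) hT'pos.le
    · calc Int.fract (u / T') * T' ≤ 1 * T' :=
            mul_le_mul_of_nonneg_right (Int.fract_lt_one _).le hT'pos.le
        _ = T' := one_mul T'
  have hD : ∀ u v : ℝ, ‖γ u - γ v‖ ≤ D := by
    intro u v
    obtain ⟨u', hu', hγu⟩ := hred u
    obtain ⟨v', hv', hγv⟩ := hred v
    rw [← hγu, ← hγv]
    exact hpmax (u', v') (Set.mk_mem_prod hu' hv')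
  have hDpos : 0 < D :=
    lt_of_lt_of_le (norm_pos_iff.2 (sub_ne_zero.2 hne)) (hD s₁ s₂)
  -- the field is small at the base point: average over a period is zero
  have hc : ‖X (γ p.2)‖ ≤ ε * D := by
    have key : (T' : ℝ) • X (γ p.2) = ∫ u in (0:ℝ)..T', (X (γ p.2) - X (γ u)) := by
      rw [intervalIntegral.integral_sub (intervalIntegrable_const) (hint 0 T'),
        hzero, sub_zero, intervalIntegral.integral_const, sub_zero]
    have hbound : ∀ u ∈ Set.uIoc (0:ℝ) T', ‖X (γ p.2) - X (γ u)‖ ≤ ε * D := by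
      intro u _
      calc ‖X (γ p.2) - X (γ u)‖ ≤ ε * ‖γ p.2 - γ u‖ := hlip p.2 u
        _ ≤ ε * D := mul_le_mul_of_nonneg_left (hD p.2 u) hε.le
    have := intervalIntegral.norm_integral_le_of_norm_le_const hbound
    rw [← key] at this
    rw [norm_smul, Real.norm_eq_abs, abs_of_pos hT'pos] at this
    rw [sub_zero, abs_of_pos hT'pos] at this
    nlinarith [norm_nonneg (X (γ p.2))]
  -- final contradiction
  have hsp : |p.1 - p.2| ≤ T' := by
    obtain ⟨⟨h1, h2⟩, h3, h4⟩ := hpK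
    rw [abs_sub_le_iff]; constructor <;> linarith
  have hboundall : ∀ u ∈ Set.uIoc p.2 p.1, ‖X (γ u)‖ ≤ 2 * (ε * D) := by
    intro u _
    calc ‖X (γ u)‖ = ‖(X (γ u) - X (γ p.2)) + X (γ p.2)‖ := by rw [sub_add_cancel]
      _ ≤ ‖X (γ u) - X (γ p.2)‖ + ‖X (γ p.2)‖ := norm_add_le _ _
      _ ≤ ε * D + ε * D := add_le_add (le_trans (hlip u p.2)
            (mul_le_mul_of_nonneg_left (hD u p.2) hε.le)) hc
      _ = 2 * (ε * D) := by ring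
  have hmain := intervalIntegral.norm_integral_le_of_norm_le_const hboundall
  rw [hFTC] at hmain
  have hεT : ε * (4 * T) = 1 := by
    rw [hεdef]; field_simp
  have h1 : D ≤ 2 * (ε * D) * T' := by
    calc D = ‖γ p.1 - γ p.2‖ := hDdef
      _ ≤ 2 * (ε * D) * |p.1 - p.2| := hmain
      _ ≤ 2 * (ε * D) * T' := mul_le_mul_of_nonneg_left hsp (by positivity)
  nlinarith [mul_pos hε hDpos]
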